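/- CVaR is subadditive: CVaR_δ(X₁ + X₂) ≤ CVaR_δ(X₁) + CVaR_δ(X₂) for integrable random variables X₁, X₂ and δ ∈ (0,1]. -/
import Mathlib


open MeasureTheory

/-- Conditional Value at Risk: CVaR_δ(X) = inf_t { t + (1/δ) E[max(X - t, 0)] }. -/
noncomputable def CVaR {Ω : Type*} [MeasureSpace Ω] (δ : ℝ) (X : Ω → ℝ) : ℝ :=
  ⨅ t : ℝ, (t + (1 / δ) * ∫ ω, max (X ω - t) 0)

lemma CVaR_aux_int {Ω : Type*} [MeasureSpace Ω] [IsProbabilityMeasure (volume : Measure Ω)] {X : Ω → ℝ} (hX : Integrable X) (t : ℝ) :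
    Integrable (fun ω => max (X ω - t) 0) :=
  (hX.sub (integrable_const t)).pos_part

lemma CVaR_bddBelow {Ω : Type*} [MeasureSpace Ω]
    [IsProbabilityMeasure (volume : Measure Ω)]
    {X : Ω → ℝ} (hX : Integrable X) {δ : ℝ} (hδ0 : 0 < δ) (hδ1 : δ ≤ 1) :
    BddBelow (Set.range fun t : ℝ => t + (1 / δ) * ∫ ω, max (X ω - t) 0) := by
  refine ⟨min 0 ((∫ ω, X ω) / δ), ?_⟩
  rintro _ ⟨t, rfl⟩
  have hδ' : (0:ℝ) < 1 / δ := by positivity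
  rcases le_or_gt 0 t with ht | ht
  · have h0 : (0:ℝ) ≤ ∫ ω, max (X ω - t) 0 := by
      apply integral_nonneg; intro ω; exact le_max_right _ _
    have : (0:ℝ) ≤ t + (1 / δ) * ∫ ω, max (X ω - t) 0 := by positivity
    exact le_trans (min_le_left _ _) this
  · have hmono : ∫ ω, (X ω - t) ≤ ∫ ω, max (X ω - t) 0 :=
      integral_mono (hX.sub (integrable_const t)) (CVaR_aux_int hX t)
        (fun ω => le_max_left _ _)
    have hsub : ∫ ω, (X ω - t) = (∫ ω, X ω) - t := by
      rw [integral_sub hX (integrable_const t), integral_const]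
      simp
    have h1δ : (1:ℝ) ≤ 1 / δ := by
      rw [le_div_iff₀ hδ0]; linarith
    have : (∫ ω, X ω) / δ ≤ t + (1 / δ) * ∫ ω, max (X ω - t) 0 := by
      have h2 : t + (1 / δ) * ((∫ ω, X ω) - t) ≤ t + (1 / δ) * ∫ ω, max (X ω - t) 0 := by
        have := hsub ▸ hmono
        nlinarith
      have h3 : (∫ ω, X ω) / δ ≤ t + (1 / δ) * ((∫ ω, X ω) - t) := by
        have : (1 - 1/δ) * t ≥ 0 := by nlinarith
        have hd : (∫ ω, X ω) / δ = (1/δ) * (∫ ω, X ω) := by ring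
        nlinarith
      linarith
    exact le_trans (min_le_right _ _) this

/-- CVaR is subadditive. -/
theorem CVaR_subadditive {Ω : Type*} [MeasureSpace Ω]
    [IsProbabilityMeasure (volume : Measure Ω)]
    (X₁ X₂ : Ω → ℝ) (hX₁ : Integrable X₁) (hX₂ : Integrable X₂)
    (δ : ℝ) (hδ0 : 0 < δ) (hδ1 : δ ≤ 1) :
    CVaR δ (fun ω => X₁ ω + X₂ ω) ≤ CVaR δ X₁ + CVaR δ X₂ := by
  have hδ' : (0:ℝ) ≤ 1 / δ := by positivity
  have hsum : Integrable (fun ω => X₁ ω + X₂ ω) := hX₁.add hX₂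
  have key : ∀ s t : ℝ, CVaR δ (fun ω => X₁ ω + X₂ ω) ≤
      (s + (1 / δ) * ∫ ω, max (X₁ ω - s) 0) + (t + (1 / δ) * ∫ ω, max (X₂ ω - t) 0) := by
    intro s t
    have h0 : CVaR δ (fun ω => X₁ ω + X₂ ω) ≤
        (s + t) + (1 / δ) * ∫ ω, max ((X₁ ω + X₂ ω) - (s + t)) 0 :=
      ciInf_le (CVaR_bddBelow hsum hδ0 hδ1) (s + t)
    have hptw : ∀ ω, max ((X₁ ω + X₂ ω) - (s + t)) 0 ≤
        max (X₁ ω - s) 0 + max (X₂ ω - t) 0 := by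
      intro ω
      apply max_le
      · have := add_le_add (le_max_left (X₁ ω - s) 0) (le_max_left (X₂ ω - t) 0)
        linarith
      · exact add_nonneg (le_max_right _ _) (le_max_right _ _)
    have hint : ∫ ω, max ((X₁ ω + X₂ ω) - (s + t)) 0 ≤
        (∫ ω, max (X₁ ω - s) 0) + ∫ ω, max (X₂ ω - t) 0 := by
      rw [← integral_add (CVaR_aux_int hX₁ s) (CVaR_aux_int hX₂ t)]
      exact integral_mono (CVaR_aux_int hsum (s + t))
        ((CVaR_aux_int hX₁ s).add (CVaR_aux_int hX₂ t)) hptw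
    have := mul_le_mul_of_nonneg_left hint hδ'
    linarith
  have h1 : ∀ s : ℝ, CVaR δ (fun ω => X₁ ω + X₂ ω) - (s + (1 / δ) * ∫ ω, max (X₁ ω - s) 0)
      ≤ CVaR δ X₂ := by
    intro s
    exact le_ciInf (fun t => by linarith [key s t])
  have h2 : CVaR δ (fun ω => X₁ ω + X₂ ω) - CVaR δ X₂ ≤ CVaR δ X₁ :=
    le_ciInf (fun s => by linarith [h1 s])
  linarith
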